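/- For every τ > 0, the function κ̃(z) = z/√(1 − iτz) maps the closed upper half plane {z ∈ ℂ : Im z ≥ 0} into itself, and satisfies |κ̃(z)| ≤ |z| for all z with Im z ≥ 0. -/

import Mathlib

theorem thermo_viscous_mapping (τ : ℝ) (hτ : 0 < τ) (z : ℂ) (hz : 0 ≤ z.im) :
    0 ≤ (z / (1 - Complex.I * τ * z) ^ (1 / 2 : ℂ)).im ∧
      ‖z / (1 - Complex.I * τ * z) ^ (1 / 2 : ℂ)‖ ≤ ‖z‖ := by
  set w : ℂ := 1 - Complex.I * τ * z with hw
  have hwre : w.re = 1 + τ * z.im := by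
    simp [hw, Complex.sub_re, Complex.mul_re, Complex.mul_im]
  have hwre1 : (1 : ℝ) ≤ w.re := by nlinarith [mul_nonneg hτ.le hz]
  have hw0 : w ≠ 0 := by
    intro h; rw [h] at hwre1; simp at hwre1; linarith
  have habsw : (1 : ℝ) ≤ ‖w‖ :=
    le_trans (le_trans hwre1 (le_abs_self _)) (Complex.abs_re_le_norm w)
  set s : ℂ := w ^ (1/2 : ℂ) with hs
  have hs0 : s ≠ 0 := by
    rw [hs]
    simp [Complex.cpow_eq_zero_iff, hw0]
  have hss : s * s = w := by
    rw [hs, ← Complex.cpow_add _ _ hw0]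
    norm_num
  have habss : ‖s‖ = ‖w‖ ^ ((1:ℝ)/2) := by
    rw [hs, Complex.norm_cpow_of_ne_zero hw0]
    norm_num
  have habss1 : (1 : ℝ) ≤ ‖s‖ := by
    rw [habss]
    exact Real.one_le_rpow habsw (by norm_num)
  have hns1 : (1 : ℝ) ≤ Complex.normSq s := by
    have := Complex.sq_norm s
    nlinarith
  have hsre : 0 ≤ s.re := by
    rw [hs, Complex.cpow_def_of_ne_zero hw0, Complex.exp_re]
    have harg : |Complex.arg w| ≤ Real.pi / 2 :=
      Complex.abs_arg_le_pi_div_two_iff.mpr (by linarith)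
    have him : (Complex.log w * (1/2 : ℂ)).im = Complex.arg w / 2 := by
      simp [Complex.mul_im, Complex.log_im]; ring
    rw [him]
    obtain ⟨h1, h2⟩ := abs_le.mp harg
    have hcos : 0 ≤ Real.cos (Complex.arg w / 2) :=
      Real.cos_nonneg_of_mem_Icc ⟨by linarith [Real.pi_pos], by linarith [Real.pi_pos]⟩
    positivity
  have hτ0 : (τ : ℂ) ≠ 0 := by exact_mod_cast hτ.ne'
  have key : z / s = Complex.I / τ * (s - s⁻¹) := by
    have hzval : z = Complex.I * (s * s - 1) / τ := by
      rw [hss, hw]; field_simp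
      linear_combination (τ:ℂ) * z * Complex.I_sq
    rw [hzval]; field_simp
  constructor
  · rw [key]
    have : (Complex.I / ↑τ * (s - s⁻¹)).im
        = (1/τ) * (s.re - s.re / Complex.normSq s) := by
      simp [Complex.mul_im, Complex.div_im, Complex.div_re, Complex.sub_im, Complex.sub_re,
        Complex.inv_im, Complex.inv_re, Complex.I_re, Complex.I_im, Complex.ofReal_re,
        Complex.ofReal_im]
    rw [this]
    have hns0 : 0 < Complex.normSq s := by linarith
    have : s.re / Complex.normSq s ≤ s.re := by
      rw [div_le_iff₀ hns0]; nlinarith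
    have h1τ : 0 ≤ 1/τ := by positivity
    nlinarith
  · rw [norm_div]
    apply div_le_self (norm_nonneg z) habss1
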